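/- Let G be a simple graph with vertex set V and v ∈ V. Then for all X ⊆ V, the rank over GF(2) of A(G^v)[X, V∖X] equals the rank of A(G)[X, V∖X], where G^v is the local complement of G at v. -/

import Mathlib

open Matrix
open scoped symmDiff

variable {V F : Type*} [Fintype V] [DecidableEq V] [Field F]

/-- Nullity of a matrix: dimension of the kernel of the associated linear map. -/
noncomputable def nullity {F : Type*} [Field F] {m n : Type*} [Fintype m] [Fintype n]
    (M : Matrix m n F) : ℕ :=
  Module.finrank F (LinearMap.ker M.mulVecLin)

/-- Submatrix A[X,Y]: rows indexed by X, columns by Y. -/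
def subm (A : Matrix V V F) (X Y : Finset V) : Matrix X Y F :=
  A.submatrix Subtype.val Subtype.val

/-- Principal pivot transform of A on Z, defined blockwise. -/
noncomputable def ppt (A : Matrix V V F) (Z : Finset V) : Matrix V V F :=
  fun i j =>
    if hi : i ∈ Z then
      if hj : j ∈ Z then (subm A Z Z)⁻¹ ⟨i, hi⟩ ⟨j, hj⟩
      else - ∑ k : Z, (subm A Z Z)⁻¹ ⟨i, hi⟩ k * A k j
    else
      if hj : j ∈ Z then ∑ k : Z, A i k * (subm A Z Z)⁻¹ k ⟨j, hj⟩
      else A i j - ∑ k : Z, ∑ l : Z, A i k * (subm A Z Z)⁻¹ k l * A l j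

/-- Local complement of a simple graph G at a vertex v: complement the subgraph
induced on the neighborhood of v. -/
def localComp {V : Type*} (G : SimpleGraph V) (v : V) : SimpleGraph V where
  Adj a b := a ≠ b ∧ Xor' (G.Adj a b) (G.Adj v a ∧ G.Adj v b)
  symm := by
    constructor
    rintro a b ⟨hne, h⟩
    refine ⟨hne.symm, ?_⟩
    rwa [G.adj_comm b a, and_comm]
  loopless := by constructor; rintro a ⟨h, -⟩; exact h rfl

instance {V : Type*} [DecidableEq V] (G : SimpleGraph V) [DecidableRel G.Adj] (v : V) :
    DecidableRel (localComp G v).Adj :=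
  fun a b => decidable_of_iff (a ≠ b ∧ ((G.Adj a b ∧ ¬(G.Adj v a ∧ G.Adj v b)) ∨
    ((G.Adj v a ∧ G.Adj v b) ∧ ¬G.Adj a b))) Iff.rfl


section Helpers

open Matrix

variable {m n : Type*} [Fintype m] [Fintype n]

private lemma mul_one_add_vecMulVec [DecidableEq n] (M : Matrix m n (ZMod 2))
    (u w : n → ZMod 2) :
    M * (1 + vecMulVec u w) = M + vecMulVec (M *ᵥ u) w := by
  rw [Matrix.mul_add, Matrix.mul_one, vecMulVec_eq Unit, vecMulVec_eq Unit,
    ← Matrix.mul_assoc, replicateCol_mulVec]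

private lemma one_add_vecMulVec_mul [DecidableEq m] (M : Matrix m n (ZMod 2))
    (u w : m → ZMod 2) :
    (1 + vecMulVec u w) * M = M + vecMulVec u (w ᵥ* M) := by
  rw [Matrix.add_mul, Matrix.one_mul, vecMulVec_eq Unit, vecMulVec_eq Unit,
    Matrix.mul_assoc, replicateRow_vecMul]

private lemma isUnit_one_add_vecMulVec [DecidableEq n] (u w : n → ZMod 2)
    (h : w ⬝ᵥ u = 0) : IsUnit (1 + vecMulVec u w) := by
  suffices hEE : (1 + vecMulVec u w) * (1 + vecMulVec u w) = 1 by
    exact ⟨⟨_, _, hEE, hEE⟩, rfl⟩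
  have hP : vecMulVec u w * vecMulVec u w = 0 := by
    rw [vecMulVec_eq Unit, Matrix.mul_assoc, ← Matrix.mul_assoc (replicateRow Unit w),
      replicateRow_mul_replicateCol, h]
    ext i j
    simp [Matrix.mul_apply]
  have h2 : vecMulVec u w + vecMulVec u w = 0 := by
    ext i j
    simp only [Matrix.add_apply, Matrix.zero_apply]
    exact CharTwo.add_self_eq_zero _
  calc (1 + vecMulVec u w) * (1 + vecMulVec u w)
      = 1 + (vecMulVec u w + vecMulVec u w) + vecMulVec u w * vecMulVec u w := by
        noncomm_ring
    _ = 1 := by rw [hP, h2, add_zero, add_zero]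

private lemma rank_add_vecMulVec_mulVec [DecidableEq n] (M : Matrix m n (ZMod 2))
    (u w : n → ZMod 2) (h : w ⬝ᵥ u = 0) :
    (M + vecMulVec (M *ᵥ u) w).rank = M.rank := by
  rw [← mul_one_add_vecMulVec]
  exact Matrix.rank_mul_eq_left_of_isUnit_det _ _
    ((Matrix.isUnit_iff_isUnit_det _).mp (isUnit_one_add_vecMulVec u w h))

private lemma rank_add_vecMulVec_vecMul [DecidableEq m] (M : Matrix m n (ZMod 2))
    (u w : m → ZMod 2) (h : w ⬝ᵥ u = 0) :
    (M + vecMulVec u (w ᵥ* M)).rank = M.rank := by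
  rw [← one_add_vecMulVec_mul]
  exact Matrix.rank_mul_eq_right_of_isUnit_det _ _
    ((Matrix.isUnit_iff_isUnit_det _).mp (isUnit_one_add_vecMulVec u w h))

end Helpers

private lemma localComp_adjMatrix_apply {V : Type*} [DecidableEq V]
    (G : SimpleGraph V) [DecidableRel G.Adj] (v : V) {i j : V} (h : i ≠ j) :
    SimpleGraph.adjMatrix (ZMod 2) (localComp G v) i j =
      SimpleGraph.adjMatrix (ZMod 2) G i j +
        SimpleGraph.adjMatrix (ZMod 2) G v i * SimpleGraph.adjMatrix (ZMod 2) G v j := by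
  by_cases h1 : G.Adj i j <;> by_cases h2 : G.Adj v i <;> by_cases h3 : G.Adj v j <;>
    simp only [SimpleGraph.adjMatrix_apply] <;>
    simp [localComp, Xor', h, h1, h2, h3] <;> decide

/-- The cut-rank over GF(2) is invariant under local complementation. -/
theorem cutRank_localComp {V : Type*} [Fintype V] [DecidableEq V]
    (G : SimpleGraph V) [DecidableRel G.Adj] (v : V) (X : Finset V) :
    (subm (SimpleGraph.adjMatrix (ZMod 2) (localComp G v)) X Xᶜ).rank =
    (subm (SimpleGraph.adjMatrix (ZMod 2) G) X Xᶜ).rank := by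
  classical
  set A := SimpleGraph.adjMatrix (ZMod 2) G with hA
  set M := subm A X Xᶜ with hM
  have hkey : subm (SimpleGraph.adjMatrix (ZMod 2) (localComp G v)) X Xᶜ =
      M + Matrix.vecMulVec (fun i : (X : Finset V) => A v i) (fun j : ((Xᶜ : Finset V)) => A v j) := by
    ext i j
    have hne : (i : V) ≠ (j : V) := by
      intro hij
      have := j.2
      rw [← hij] at this
      exact (Finset.mem_compl.mp this) i.2
    simp only [hM, hA, subm, Matrix.submatrix_apply, Matrix.add_apply,
      Matrix.vecMulVec_apply]
    exact localComp_adjMatrix_apply G v hne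
  rw [hkey]
  by_cases hv : v ∈ X
  · -- v ∈ X: row v of M is (fun j => A v j)
    have hrow : (fun j : ((Xᶜ : Finset V)) => A v j) = (Pi.single (⟨v, hv⟩ : X) (1 : ZMod 2)) ᵥ* M := by
      funext j
      simp only [Matrix.single_vecMul, one_mul]
      rw [one_smul]; rfl
    rw [hrow]
    apply rank_add_vecMulVec_vecMul
    rw [single_dotProduct, one_mul]
    simp [hA, SimpleGraph.adjMatrix_apply]
  · -- v ∈ Xᶜ: column v of M is (fun i => A v i)
    have hv' : v ∈ (Xᶜ : Finset V) := Finset.mem_compl.mpr hv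
    have hcol : (fun i : (X : Finset V) => A v i) = M *ᵥ (Pi.single (⟨v, hv'⟩ : ((Xᶜ : Finset V))) (1 : ZMod 2)) := by
      funext i
      simp only [Matrix.mulVec_single, mul_one]
      simp only [hM, hA, subm, Matrix.submatrix_apply, SimpleGraph.adjMatrix_apply]
      rw [MulOpposite.op_one, one_smul]
      exact if_congr (G.adj_comm v (i : V)) rfl rfl
    rw [hcol]
    apply rank_add_vecMulVec_mulVec
    rw [dotProduct_single, mul_one]
    simp [hA, SimpleGraph.adjMatrix_apply]
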